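/- Let p be a prime, l ≥ 1 and s a positive divisor of p−1. Then the image {x^{s p^{l−1}} : x ∈ Z/p^l Z} has exactly k = 1 + (p−1)/s elements. -/

import Mathlib

lemma aux_pow_eq_of_cast_eq (p l : ℕ) (hp : p.Prime) (hl : 1 ≤ l) (a b : ZMod (p ^ l))
    (h : ZMod.castHom (dvd_pow_self p (Nat.one_le_iff_ne_zero.mp hl)) (ZMod p) a =
      ZMod.castHom (dvd_pow_self p (Nat.one_le_iff_ne_zero.mp hl)) (ZMod p) b) :
    a ^ p ^ (l - 1) = b ^ p ^ (l - 1) := by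
  haveI : Fact p.Prime := ⟨hp⟩
  haveI : NeZero (p ^ l) := ⟨pow_ne_zero l hp.pos.ne'⟩
  have h0 : (ZMod.castHom (dvd_pow_self p (Nat.one_le_iff_ne_zero.mp hl)) (ZMod p)) (a - b) = 0 := by
    rw [map_sub, h, sub_self]
  have hval : (((a - b).val : ℕ) : ZMod p) = 0 := by
    rw [← h0, ZMod.castHom_apply, ZMod.natCast_val]
  rw [ZMod.natCast_eq_zero_iff] at hval
  have hdvd : (p : ZMod (p ^ l)) ∣ a - b := by
    obtain ⟨k, hk⟩ := hval
    refine ⟨(k : ZMod (p ^ l)), ?_⟩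
    have : (((a - b).val : ℕ) : ZMod (p ^ l)) = a - b := by
      rw [ZMod.natCast_val, ZMod.cast_id]
    rw [← this, hk]
    push_cast
    ring
  have key := dvd_sub_pow_of_dvd_sub hdvd (l - 1)
  rw [show l - 1 + 1 = l by omega] at key
  have hz : (p : ZMod (p ^ l)) ^ l = 0 := by
    rw [← Nat.cast_pow, ZMod.natCast_self]
  rw [hz, zero_dvd_iff, sub_eq_zero] at key
  exact key

lemma aux_card_pow_range_field (p s : ℕ) (hp : p.Prime) (hs : 0 < s) (hsd : s ∣ p - 1) :
    Nat.card (Set.range fun y : ZMod p => y ^ s) = 1 + (p - 1) / s := by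
  haveI : Fact p.Prime := ⟨hp⟩
  obtain ⟨g, hg⟩ := IsCyclic.exists_generator (α := (ZMod p)ˣ)
  have hB : (Set.range fun y : ZMod p => y ^ s) =
      insert (0 : ZMod p) ((fun u : (ZMod p)ˣ => (u : ZMod p)) ''
        (Subgroup.zpowers (g ^ s) : Set (ZMod p)ˣ)) := by
    ext y
    constructor
    · rintro ⟨x, rfl⟩
      rcases eq_or_ne x 0 with rfl | hx
      · left; exact zero_pow hs.ne'
      · right
        obtain ⟨u, rfl⟩ := (isUnit_iff_ne_zero.mpr hx)
        obtain ⟨k, hk⟩ := hg u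
        refine ⟨u ^ s, ?_, by push_cast; ring⟩
        refine ⟨k, ?_⟩
        show (g ^ s) ^ k = u ^ s
        rw [← hk]
        show (g ^ s) ^ k = (g ^ k) ^ s
        simp only [← zpow_natCast, ← zpow_mul]
        rw [mul_comm]
    · rintro (rfl | ⟨u, ⟨k, hk⟩, rfl⟩)
      · exact ⟨0, zero_pow hs.ne'⟩
      · refine ⟨((g ^ k : (ZMod p)ˣ) : ZMod p), ?_⟩
        have hu : (g ^ k) ^ s = u := by
          rw [← hk]
          show (g ^ k) ^ s = (g ^ s) ^ k
          simp only [← zpow_natCast, ← zpow_mul]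
          rw [mul_comm]
        simp only [← hu, Units.val_pow_eq_pow_val]
  rw [hB, Nat.card_coe_set_eq, Set.ncard_insert_of_notMem, add_comm]
  · congr 1
    rw [Set.ncard_image_of_injective _ Units.val_injective, ← Nat.card_coe_set_eq]
    have : Nat.card (Subgroup.zpowers (g ^ s) : Set (ZMod p)ˣ) = orderOf (g ^ s) := by
      rw [SetLike.coe_sort_coe, Nat.card_zpowers]
    rw [this, orderOf_pow, orderOf_eq_card_of_forall_mem_zpowers hg, Nat.card_eq_fintype_card,
      ZMod.card_units_eq_totient, Nat.totient_prime hp, Nat.gcd_eq_right hsd]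
  · rintro ⟨u, -, hu⟩
    exact u.ne_zero hu

theorem stmt_11 (p l s : ℕ) (hp : p.Prime) (hl : 1 ≤ l)
    (hs : 0 < s) (hsd : s ∣ p - 1) :
    Nat.card (Set.range fun x : ZMod (p ^ l) => x ^ (s * p ^ (l - 1))) =
      1 + (p - 1) / s := by
  haveI : Fact p.Prime := ⟨hp⟩
  haveI : NeZero (p ^ l) := ⟨pow_ne_zero l hp.pos.ne'⟩
  have hdvd : p ∣ p ^ l := dvd_pow_self p (Nat.one_le_iff_ne_zero.mp hl)
  set π := ZMod.castHom hdvd (ZMod p) with hπ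
  have key : ∀ x : ZMod (p ^ l), π (x ^ (s * p ^ (l - 1))) = (π x) ^ s := by
    intro x
    rw [map_pow, pow_mul]
    exact ZMod.pow_card_pow _
  have himg : π '' (Set.range fun x : ZMod (p ^ l) => x ^ (s * p ^ (l - 1))) =
      Set.range fun y : ZMod p => y ^ s := by
    ext y
    constructor
    · rintro ⟨-, ⟨x, rfl⟩, rfl⟩
      exact ⟨π x, (key x).symm⟩
    · rintro ⟨z, rfl⟩
      refine ⟨(z.val : ZMod (p ^ l)) ^ (s * p ^ (l - 1)), ⟨_, rfl⟩, ?_⟩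
      rw [key, map_natCast, ZMod.natCast_val, ZMod.cast_id]
  have hinj : Set.InjOn π (Set.range fun x : ZMod (p ^ l) => x ^ (s * p ^ (l - 1))) := by
    rintro - ⟨x, rfl⟩ - ⟨x', rfl⟩ h
    rw [key, key] at h
    have h' : π (x ^ s) = π (x' ^ s) := by rw [map_pow, map_pow]; exact h
    have := aux_pow_eq_of_cast_eq p l hp hl (x ^ s) (x' ^ s) h'
    show x ^ (s * p ^ (l - 1)) = x' ^ (s * p ^ (l - 1))
    rw [pow_mul, pow_mul]
    exact this
  calc Nat.card (Set.range fun x : ZMod (p ^ l) => x ^ (s * p ^ (l - 1)))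
      = (Set.range fun x : ZMod (p ^ l) => x ^ (s * p ^ (l - 1))).ncard :=
        Nat.card_coe_set_eq _
    _ = (π '' (Set.range fun x : ZMod (p ^ l) => x ^ (s * p ^ (l - 1)))).ncard :=
        (Set.ncard_image_of_injOn hinj).symm
    _ = (Set.range fun y : ZMod p => y ^ s).ncard := by rw [himg]
    _ = Nat.card (Set.range fun y : ZMod p => y ^ s) := (Nat.card_coe_set_eq _).symm
    _ = 1 + (p - 1) / s := aux_card_pow_range_field p s hp hs hsd
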